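/- Let i_1,…,i_s be positive integers with m_i = ∑_{k=1}^s min(i, i_k) and I := {i ∈ {1,…,max i_k} : ∃k, i_k = i}. If i ∈ I and m_i ≠ ∑_k i_k, then m_i − 1 ∉ {m_j : 0 ≤ j ≤ max i_k}; moreover if i ∈ I is such that at least two indices k satisfy i_k = i, then m_i − m_{i−1} ≥ 2. -/
import Mathlib


/-- with `m_i = ∑_k min(i, i_k)` and `i₀` an attained value of the `i_k`,
if `m_{i₀} ≠ ∑_k i_k` then `m_{i₀} - 1` is not of the form `m_j` for `j ≤ max i_k`;
moreover if at least two indices `k` satisfy `i_k = i₀`, then `m_{i₀} - m_{i₀-1} ≥ 2`. -/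
theorem m_pred_not_attained_and_gap
    {s : ℕ} (i : Fin s → ℕ) (hpos : ∀ k, 0 < i k)
    (m : ℕ → ℕ) (hm : ∀ j, m j = ∑ k, min j (i k))
    (i₀ : ℕ) (hi₀ : ∃ k, i k = i₀) :
    (m i₀ ≠ ∑ k, i k → ∀ j ≤ Finset.univ.sup i, m i₀ - 1 ≠ m j) ∧
    ((∃ k k' : Fin s, k ≠ k' ∧ i k = i₀ ∧ i k' = i₀) → 2 ≤ m i₀ - m (i₀ - 1)) := by
  obtain ⟨k₀, hk₀⟩ := hi₀
  have hi₀pos : 0 < i₀ := hk₀ ▸ hpos k₀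
  have hmono : ∀ a b : ℕ, a ≤ b → m a ≤ m b := by
    intro a b hab
    rw [hm, hm]
    exact Finset.sum_le_sum fun k _ => min_le_min hab le_rfl
  have hstep : ∀ j, m (j+1) = m j + (Finset.univ.filter (fun k => j < i k)).card := by
    intro j
    rw [hm, hm, Finset.card_filter, ← Finset.sum_add_distrib]
    apply Finset.sum_congr rfl
    intro k _
    by_cases h : j < i k <;> simp [h] <;> omega
  have hfilt2 : ∀ k k' : Fin s, k ≠ k' → i₀ ≤ i k → i₀ ≤ i k' →
      2 ≤ (Finset.univ.filter (fun k => i₀ - 1 < i k)).card := by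
    intro k k' hne hk hk'
    have hsub : ({k, k'} : Finset (Fin s)) ⊆ Finset.univ.filter (fun k => i₀ - 1 < i k) := by
      intro x hx
      simp only [Finset.mem_insert, Finset.mem_singleton] at hx
      simp only [Finset.mem_filter, Finset.mem_univ, true_and]
      rcases hx with rfl | rfl <;> omega
    calc 2 = ({k, k'} : Finset (Fin s)).card := by
            rw [Finset.card_insert_of_notMem (by simpa using hne), Finset.card_singleton]
      _ ≤ _ := Finset.card_le_card hsub
  have hgap : ∀ k k' : Fin s, k ≠ k' → i₀ ≤ i k → i₀ ≤ i k' → m (i₀-1) + 2 ≤ m i₀ := by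
    intro k k' hne hk hk'
    have h1 := hstep (i₀ - 1)
    have h2 := hfilt2 k k' hne hk hk'
    have h3 : i₀ - 1 + 1 = i₀ := by omega
    rw [h3] at h1
    omega
  constructor
  · intro hne j hj heq
    have hex : ∃ k', i₀ < i k' := by
      by_contra h
      push_neg at h
      apply hne
      rw [hm]
      exact Finset.sum_congr rfl fun k _ => min_eq_right (h k)
    obtain ⟨k', hk'⟩ := hex
    have hne' : k₀ ≠ k' := by
      intro h; rw [h] at hk₀; omega
    have hgap' := hgap k₀ k' hne' hk₀.ge hk'.le
    have hjlt : j < i₀ := by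
      by_contra h
      push_neg at h
      have := hmono i₀ j h
      omega
    have := hmono j (i₀ - 1) (by omega)
    omega
  · rintro ⟨k, k', hne, hk, hk'⟩
    have := hgap k k' hne hk.ge hk'.ge
    omega
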